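/- Define r = inf{s ≥ 0 : μ([s, s+ε)) > 0 for all ε > 0} and l = sup{s < 0 : μ((s-ε, s]) > 0 for all ε > 0}, and m = (l+r)/2, assuming 0 < μ([0,∞)) < 1 and Gaussian moments. If α > m then π(t, αt) → 1 as t → ∞, and if α < m then π(t, αt) → 0 as t → ∞, where π(t,x) = ∫_{[0,∞)} e^{bx-b²t/2} μ(db)/∫_ℝ e^{bx-b²t/2} μ(db). -/

import Mathlib

open MeasureTheory Set Filter

/-- The posterior probability that the drift lies in `S` under the tilted measure `μ_{t,x}`. -/
noncomputable def tiltProb (μ : Measure ℝ) (t x : ℝ) (S : Set ℝ) : ℝ :=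
  (∫ b in S, Real.exp (b * x - b ^ 2 * t / 2) ∂μ) /
  (∫ b, Real.exp (b * x - b ^ 2 * t / 2) ∂μ)

/-- The left endpoint `r` of the support of `μ` restricted to `[0,∞)`. -/
noncomputable def rEnd (μ : Measure ℝ) : ℝ :=
  sInf {s : ℝ | 0 ≤ s ∧ ∀ ε > (0:ℝ), 0 < μ (Set.Ico s (s + ε))}

/-- The right endpoint `l` of the support of `μ` restricted to `(-∞,0)`. -/
noncomputable def lEnd (μ : Measure ℝ) : ℝ :=
  sSup {s : ℝ | s < 0 ∧ ∀ ε > (0:ℝ), 0 < μ (Set.Ioc (s - ε) s)}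

namespace Stmt10Aux

variable {μ : Measure ℝ}

lemma integrable_tilt [IsFiniteMeasure μ] (α t : ℝ) (ht : 0 ≤ t) :
    Integrable (fun b => Real.exp (b * (α * t) - b ^ 2 * t / 2)) μ := by
  refine (integrable_const (Real.exp (α ^ 2 * t / 2))).mono' ?_ ?_
  · exact (Real.continuous_exp.comp (by continuity)).aestronglyMeasurable
  · refine ae_of_all _ fun b => ?_
    rw [Real.norm_eq_abs, abs_of_pos (Real.exp_pos _), Real.exp_le_exp]
    nlinarith [mul_nonneg (sq_nonneg (b - α)) ht]

lemma setIntegral_tilt_pos [IsFiniteMeasure μ] {S : Set ℝ}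
    (hμS : 0 < μ S) (α t : ℝ) (ht : 0 ≤ t) :
    0 < ∫ b in S, Real.exp (b * (α * t) - b ^ 2 * t / 2) ∂μ := by
  rw [setIntegral_pos_iff_support_of_nonneg_ae (ae_of_all _ fun b => (Real.exp_pos _).le)
    (integrable_tilt α t ht).integrableOn]
  have : Function.support (fun b : ℝ => Real.exp (b * (α * t) - b ^ 2 * t / 2)) = univ :=
    Set.eq_univ_of_forall fun b => (Real.exp_pos _).ne'
  rw [this, univ_inter]; exact hμS

lemma ratio_tendsto [IsFiniteMeasure μ] (α K : ℝ) {P Q I : Set ℝ}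
    (hI : MeasurableSet I) (hIP : I ⊆ P) (hIpos : 0 < μ I)
    (hK : ∀ b ∈ I, (b - α) ^ 2 ≤ K)
    (hQK : ∀ᵐ b ∂(μ.restrict Q), K < (b - α) ^ 2) :
    Tendsto (fun t => (∫ b in Q, Real.exp (b * (α * t) - b ^ 2 * t / 2) ∂μ) /
      (∫ b in P, Real.exp (b * (α * t) - b ^ 2 * t / 2) ∂μ)) atTop (nhds 0) := by
  set c := (μ I).toReal with hc
  have hcpos : 0 < c := ENNReal.toReal_pos hIpos.ne' (measure_ne_top μ I)
  set G : ℝ → ℝ := fun t => ∫ b in Q, Real.exp ((K - (b - α) ^ 2) * t / 2) ∂μ with hGdef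
  have hG : Tendsto G atTop (nhds 0) := by
    have hmeas : ∀ᶠ (t : ℝ) in atTop, AEStronglyMeasurable
        (fun b => Real.exp ((K - (b - α) ^ 2) * t / 2)) (μ.restrict Q) :=
      Eventually.of_forall fun t =>
        (Real.continuous_exp.comp (by continuity)).aestronglyMeasurable
    have h := tendsto_integral_filter_of_dominated_convergence (μ := μ.restrict Q)
      (F := fun t b => Real.exp ((K - (b - α) ^ 2) * t / 2)) (f := fun _ => 0)
      (bound := fun _ => 1) hmeas ?_ (integrable_const 1) ?_
    · simpa using h
    · filter_upwards [eventually_ge_atTop (0:ℝ)] with t ht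
      filter_upwards [hQK] with b hb
      rw [Real.norm_eq_abs, abs_of_pos (Real.exp_pos _)]
      have h2 : (K - (b - α) ^ 2) * t / 2 ≤ 0 := by nlinarith
      calc Real.exp ((K - (b - α) ^ 2) * t / 2) ≤ Real.exp 0 := Real.exp_le_exp.mpr h2
        _ = 1 := Real.exp_zero
    · filter_upwards [hQK] with b hb
      have h1 : Tendsto (fun t : ℝ => (K - (b - α) ^ 2) / 2 * t) atTop atBot :=
        Tendsto.const_mul_atTop_of_neg (by nlinarith) tendsto_id
      have h2 := Real.tendsto_exp_atBot.comp h1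
      exact h2.congr fun t => by simp [Function.comp]; ring_nf
  refine squeeze_zero' ?_ ?_ (by simpa using hG.div_const c)
  · filter_upwards [eventually_ge_atTop (0:ℝ)] with t ht
    have hint := integrable_tilt (μ := μ) α t ht
    refine div_nonneg (integral_nonneg fun b => (Real.exp_pos _).le) ?_
    exact integral_nonneg fun b => (Real.exp_pos _).le
  · filter_upwards [eventually_ge_atTop (0:ℝ)] with t ht
    have hint := integrable_tilt (μ := μ) α t ht
    have hlow : Real.exp ((α ^ 2 - K) * t / 2) * c ≤
        ∫ b in I, Real.exp (b * (α * t) - b ^ 2 * t / 2) ∂μ := by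
      refine setIntegral_ge_of_const_le_real hI (measure_ne_top μ I) (fun b hbI => ?_)
        hint.integrableOn
      rw [Real.exp_le_exp]
      nlinarith [hK b hbI, mul_nonneg (sub_nonneg.mpr (hK b hbI)) ht]
    have hmono : (∫ b in I, Real.exp (b * (α * t) - b ^ 2 * t / 2) ∂μ) ≤
        ∫ b in P, Real.exp (b * (α * t) - b ^ 2 * t / 2) ∂μ :=
      setIntegral_mono_set hint.integrableOn (ae_of_all _ fun b => (Real.exp_pos _).le)
        (HasSubset.Subset.eventuallyLE hIP)
    have hPpos : 0 < ∫ b in P, Real.exp (b * (α * t) - b ^ 2 * t / 2) ∂μ :=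
      lt_of_lt_of_le (by positivity) (hlow.trans hmono)
    have hGnonneg : 0 ≤ G t := integral_nonneg fun b => (Real.exp_pos _).le
    have hQrw : (∫ b in Q, Real.exp (b * (α * t) - b ^ 2 * t / 2) ∂μ)
        = Real.exp ((α ^ 2 - K) * t / 2) * G t := by
      rw [hGdef, ← integral_const_mul]
      refine integral_congr_ae (ae_of_all _ fun b => ?_)
      simp only []
      rw [← Real.exp_add]
      congr 1
      ring
    rw [hQrw, div_le_div_iff₀ hPpos hcpos]
    calc Real.exp ((α ^ 2 - K) * t / 2) * G t * c
        = G t * (Real.exp ((α ^ 2 - K) * t / 2) * c) := by ring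
      _ ≤ G t * ∫ b in P, Real.exp (b * (α * t) - b ^ 2 * t / 2) ∂μ :=
          mul_le_mul_of_nonneg_left (hlow.trans hmono) hGnonneg

lemma exists_rset {z : ℝ} (hz : 0 < μ (Icc 0 z)) :
    ∃ c, (0 ≤ c ∧ ∀ ε > (0:ℝ), 0 < μ (Ico c (c + ε))) ∧ c ≤ z := by
  set T : Set ℝ := {x | μ (Ico 0 x) = 0} with hT
  have h0T : (0:ℝ) ∈ T := by simp [hT]
  have hTz : ∀ x ∈ T, x ≤ z := by
    intro x hx
    by_contra hcon
    push_neg at hcon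
    have hsub : Icc (0:ℝ) z ⊆ Ico 0 x := fun y hy => ⟨hy.1, lt_of_le_of_lt hy.2 hcon⟩
    exact absurd (measure_mono_null hsub hx) hz.ne'
  have hbdd : BddAbove T := ⟨z, hTz⟩
  set c := sSup T with hcdef
  have hc0 : 0 ≤ c := le_csSup hbdd h0T
  have hnull : μ (Ico 0 c) = 0 := by
    have hsub : Ico (0:ℝ) c ⊆ ⋃ n : ℕ, Ico 0 (c - 1 / (n + 1)) := by
      intro y hy
      obtain ⟨n, hn⟩ := exists_nat_one_div_lt (sub_pos.mpr hy.2)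
      exact mem_iUnion.mpr ⟨n, hy.1, by linarith⟩
    refine measure_mono_null hsub (measure_iUnion_null fun n => ?_)
    have h1 : (0:ℝ) < 1 / (n + 1) := by positivity
    obtain ⟨x, hxT, hx⟩ := exists_lt_of_lt_csSup ⟨0, h0T⟩ (by linarith : c - 1 / (n+1:ℝ) < c)
    exact measure_mono_null (Ico_subset_Ico_right hx.le) hxT
  refine ⟨c, ⟨hc0, fun ε hε => ?_⟩, csSup_le ⟨0, h0T⟩ hTz⟩
  have hmem : c + ε ∉ T := fun h => absurd (le_csSup hbdd h) (by linarith)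
  have hne : μ (Ico 0 (c + ε)) ≠ 0 := fun h0 => hmem h0
  have hpos : 0 < μ (Ico 0 (c + ε)) := pos_iff_ne_zero.mpr hne
  have hsplit : Ico (0:ℝ) (c + ε) ⊆ Ico 0 c ∪ Ico c (c + ε) := by
    intro y hy
    rcases lt_or_ge y c with h | h
    · exact Or.inl ⟨hy.1, h⟩
    · exact Or.inr ⟨h, hy.2⟩
  have hle := (measure_mono (μ := μ) hsplit).trans (measure_union_le (μ := μ) _ _)
  rw [hnull, zero_add] at hle
  exact lt_of_lt_of_le hpos hle

lemma rset_nonempty (hμ0 : 0 < μ (Ici (0:ℝ))) :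
    {s : ℝ | 0 ≤ s ∧ ∀ ε > (0:ℝ), 0 < μ (Set.Ico s (s + ε))}.Nonempty := by
  have hex : ∃ n : ℕ, 0 < μ (Icc (0:ℝ) n) := by
    by_contra hcon
    push_neg at hcon
    have hsub : Ici (0:ℝ) ⊆ ⋃ n : ℕ, Icc (0:ℝ) n := by
      intro y hy
      obtain ⟨n, hn⟩ := exists_nat_ge y
      exact mem_iUnion.mpr ⟨n, hy, hn⟩
    exact absurd (measure_mono_null hsub
      (measure_iUnion_null fun n => le_antisymm (hcon n) zero_le)) hμ0.ne'
  obtain ⟨n, hn⟩ := hex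
  obtain ⟨c, hc, _⟩ := exists_rset hn
  exact ⟨c, hc⟩

lemma rEnd_nonneg (hμ0 : 0 < μ (Ici (0:ℝ))) : 0 ≤ rEnd μ :=
  le_csInf (rset_nonempty hμ0) fun s hs => hs.1

lemma exists_rset_near (hμ0 : 0 < μ (Ici (0:ℝ))) {θ : ℝ} (hθ : 0 < θ) :
    ∃ s, (0 ≤ s ∧ ∀ ε > (0:ℝ), 0 < μ (Ico s (s + ε))) ∧ rEnd μ ≤ s ∧ s < rEnd μ + θ := by
  obtain ⟨s, hs, hlt⟩ := exists_lt_of_csInf_lt (rset_nonempty hμ0)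
    (lt_add_of_pos_right (rEnd μ) hθ)
  exact ⟨s, hs, csInf_le ⟨0, fun x hx => hx.1⟩ hs, hlt⟩

lemma null_Ico_rEnd (hμ0 : 0 < μ (Ici (0:ℝ))) : μ (Ico 0 (rEnd μ)) = 0 := by
  by_contra hcon
  have hsub : Ico (0:ℝ) (rEnd μ) ⊆ ⋃ n : ℕ, Icc 0 (rEnd μ - 1 / (n + 1)) := by
    intro y hy
    obtain ⟨n, hn⟩ := exists_nat_one_div_lt (sub_pos.mpr hy.2)
    exact mem_iUnion.mpr ⟨n, hy.1, by linarith⟩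
  have hex : ∃ n : ℕ, 0 < μ (Icc (0:ℝ) (rEnd μ - 1 / (n + 1))) := by
    by_contra h
    push_neg at h
    exact absurd (measure_mono_null hsub
      (measure_iUnion_null fun n => le_antisymm (h n) zero_le)) hcon
  obtain ⟨n, hn⟩ := hex
  obtain ⟨c, hc, hcz⟩ := exists_rset hn
  have hrc : rEnd μ ≤ c := csInf_le ⟨0, fun x hx => hx.1⟩ hc
  have h1 : (0:ℝ) < 1 / (n + 1) := by positivity
  linarith

lemma exists_lset {z w : ℝ} (hw : w < 0) (hzw : 0 < μ (Icc z w)) :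
    ∃ c, (c < 0 ∧ ∀ ε > (0:ℝ), 0 < μ (Ioc (c - ε) c)) ∧ z ≤ c := by
  set T : Set ℝ := {x | μ (Ioc x w) = 0} with hT
  have hwT : w ∈ T := by simp [hT]
  have hTz : ∀ x ∈ T, z ≤ x := by
    intro x hx
    by_contra hcon
    push_neg at hcon
    have hsub : Icc z w ⊆ Ioc x w := fun y hy => ⟨lt_of_lt_of_le hcon hy.1, hy.2⟩
    exact absurd (measure_mono_null hsub hx) hzw.ne'
  have hbdd : BddBelow T := ⟨z, hTz⟩
  set c := sInf T with hcdef
  have hcw : c ≤ w := csInf_le hbdd hwT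
  have hnull : μ (Ioc c w) = 0 := by
    have hsub : Ioc c w ⊆ ⋃ n : ℕ, Ioc (c + 1 / (n + 1)) w := by
      intro y hy
      obtain ⟨n, hn⟩ := exists_nat_one_div_lt (sub_pos.mpr hy.1)
      exact mem_iUnion.mpr ⟨n, by linarith, hy.2⟩
    refine measure_mono_null hsub (measure_iUnion_null fun n => ?_)
    have h1 : (0:ℝ) < 1 / (n + 1) := by positivity
    obtain ⟨x, hxT, hx⟩ := exists_lt_of_csInf_lt ⟨w, hwT⟩ (by linarith : c < c + 1 / (n+1:ℝ))
    exact measure_mono_null (Ioc_subset_Ioc_left hx.le) hxT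
  refine ⟨c, ⟨lt_of_le_of_lt hcw hw, fun ε hε => ?_⟩, le_csInf ⟨w, hwT⟩ hTz⟩
  have hmem : c - ε ∉ T := fun h => absurd (csInf_le hbdd h) (by linarith)
  have hne : μ (Ioc (c - ε) w) ≠ 0 := fun h0 => hmem h0
  have hpos : 0 < μ (Ioc (c - ε) w) := pos_iff_ne_zero.mpr hne
  have hsplit : Ioc (c - ε) w ⊆ Ioc (c - ε) c ∪ Ioc c w := by
    intro y hy
    rcases le_or_gt y c with h | h
    · exact Or.inl ⟨hy.1, h⟩
    · exact Or.inr ⟨h, hy.2⟩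
  have hle := (measure_mono (μ := μ) hsplit).trans (measure_union_le (μ := μ) _ _)
  rw [hnull, add_zero] at hle
  exact lt_of_lt_of_le hpos hle

lemma lset_nonempty (hμn : 0 < μ (Iio (0:ℝ))) :
    {s : ℝ | s < 0 ∧ ∀ ε > (0:ℝ), 0 < μ (Set.Ioc (s - ε) s)}.Nonempty := by
  have hex : ∃ n : ℕ, 0 < μ (Icc (-(n + 1) : ℝ) (-(1 / (n + 1)))) := by
    by_contra h
    push_neg at h
    have hsub : Iio (0:ℝ) ⊆ ⋃ n : ℕ, Icc (-(n + 1) : ℝ) (-(1 / (n + 1))) := by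
      intro y hy
      have hy' : y < 0 := hy
      obtain ⟨n₁, hn₁⟩ := exists_nat_one_div_lt (by linarith : (0:ℝ) < -y)
      obtain ⟨n₂, hn₂⟩ := exists_nat_ge (-y)
      have h2 : (n₂:ℝ) ≤ ((max n₁ n₂ : ℕ) : ℝ) := Nat.cast_le.mpr (le_max_right _ _)
      have h3 : (n₁:ℝ) ≤ ((max n₁ n₂ : ℕ) : ℝ) := Nat.cast_le.mpr (le_max_left _ _)
      have hm1 : 1 / (((max n₁ n₂ : ℕ) : ℝ) + 1) ≤ 1 / ((n₁:ℝ) + 1) :=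
        one_div_le_one_div_of_le (by positivity) (by linarith)
      refine mem_iUnion.mpr ⟨max n₁ n₂, ?_, ?_⟩
      · show -(((max n₁ n₂ : ℕ) : ℝ) + 1) ≤ y
        linarith
      · show y ≤ -(1 / (((max n₁ n₂ : ℕ) : ℝ) + 1))
        linarith
    exact absurd (measure_mono_null hsub
      (measure_iUnion_null fun n => le_antisymm (h n) zero_le)) hμn.ne'
  obtain ⟨n, hn⟩ := hex
  have h1 : (0:ℝ) < 1 / (n + 1) := by positivity
  obtain ⟨c, hc, _⟩ := exists_lset (by linarith : (-(1 / (n + 1)) : ℝ) < 0) hn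
  exact ⟨c, hc⟩

lemma lEnd_nonpos (hμn : 0 < μ (Iio (0:ℝ))) : lEnd μ ≤ 0 :=
  csSup_le (lset_nonempty hμn) fun s hs => hs.1.le

lemma exists_lset_near (hμn : 0 < μ (Iio (0:ℝ))) {θ : ℝ} (hθ : 0 < θ) :
    ∃ s, (s < 0 ∧ ∀ ε > (0:ℝ), 0 < μ (Ioc (s - ε) s)) ∧ s ≤ lEnd μ ∧ lEnd μ - θ < s := by
  obtain ⟨s, hs, hlt⟩ := exists_lt_of_lt_csSup (lset_nonempty hμn)
    (by linarith : lEnd μ - θ < lEnd μ)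
  exact ⟨s, hs, le_csSup ⟨0, fun x hx => hx.1.le⟩ hs, hlt⟩

lemma null_Ioo_lEnd (hμn : 0 < μ (Iio (0:ℝ))) : μ (Ioo (lEnd μ) 0) = 0 := by
  by_contra hcon
  have hsub : Ioo (lEnd μ) 0 ⊆ ⋃ n : ℕ, Icc (lEnd μ + 1 / (n + 1)) (-(1 / (n + 1))) := by
    intro y hy
    obtain ⟨n₁, hn₁⟩ := exists_nat_one_div_lt (sub_pos.mpr hy.1)
    obtain ⟨n₂, hn₂⟩ := exists_nat_one_div_lt (neg_pos.mpr hy.2)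
    have hc1 : (n₁:ℝ) ≤ (max n₁ n₂ : ℕ) := Nat.cast_le.mpr (le_max_left _ _)
    have hc2 : (n₂:ℝ) ≤ (max n₁ n₂ : ℕ) := Nat.cast_le.mpr (le_max_right _ _)
    have hm1 : 1 / ((max n₁ n₂ : ℕ) + 1 : ℝ) ≤ 1 / (n₁ + 1) :=
      one_div_le_one_div_of_le (by positivity) (by linarith)
    have hm2 : 1 / ((max n₁ n₂ : ℕ) + 1 : ℝ) ≤ 1 / (n₂ + 1) :=
      one_div_le_one_div_of_le (by positivity) (by linarith)
    exact mem_iUnion.mpr ⟨max n₁ n₂, by linarith, by linarith⟩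
  have hex : ∃ n : ℕ, 0 < μ (Icc (lEnd μ + 1 / (n + 1)) (-(1 / (n + 1)))) := by
    by_contra h
    push_neg at h
    exact absurd (measure_mono_null hsub
      (measure_iUnion_null fun n => le_antisymm (h n) zero_le)) hcon
  obtain ⟨n, hn⟩ := hex
  have h1 : (0:ℝ) < 1 / (n + 1) := by positivity
  obtain ⟨c, hc, hzc⟩ := exists_lset (by linarith : (-(1 / (n + 1)) : ℝ) < 0) hn
  have hcl : c ≤ lEnd μ := le_csSup ⟨0, fun x hx => hx.1.le⟩ hc
  linarith

lemma tendsto_tilt_one (μ : Measure ℝ) [IsProbabilityMeasure μ]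
    (hμ0 : 0 < μ (Ici (0:ℝ))) (α K : ℝ) (I : Set ℝ)
    (hI : MeasurableSet I) (hIP : I ⊆ Ici 0) (hIpos : 0 < μ I)
    (hK : ∀ b ∈ I, (b - α) ^ 2 ≤ K)
    (hQK : ∀ᵐ b ∂(μ.restrict (Iio 0)), K < (b - α) ^ 2) :
    Tendsto (fun t => tiltProb μ t (α * t) (Set.Ici 0)) atTop (nhds 1) := by
  have key := ratio_tendsto (μ := μ) α K (P := Ici 0) (Q := Iio 0) hI hIP hIpos hK hQK
  have hone : Tendsto (fun t => (1 +
      (∫ b in Iio (0:ℝ), Real.exp (b * (α * t) - b ^ 2 * t / 2) ∂μ) /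
      (∫ b in Ici (0:ℝ), Real.exp (b * (α * t) - b ^ 2 * t / 2) ∂μ))⁻¹) atTop (nhds 1) := by
    have h := (tendsto_const_nhds (x := (1:ℝ))).div
      ((tendsto_const_nhds (x := (1:ℝ))).add key) (by norm_num)
    simpa [Pi.div_def] using h
  refine Tendsto.congr' ?_ hone
  filter_upwards [eventually_ge_atTop (0:ℝ)] with t ht
  have hint := integrable_tilt (μ := μ) α t ht
  set N := ∫ b in Ici (0:ℝ), Real.exp (b * (α * t) - b ^ 2 * t / 2) ∂μ with hN
  set M := ∫ b in Iio (0:ℝ), Real.exp (b * (α * t) - b ^ 2 * t / 2) ∂μ with hM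
  have hNpos : 0 < N := setIntegral_tilt_pos hμ0 α t ht
  have hMnn : 0 ≤ M := integral_nonneg fun b => (Real.exp_pos _).le
  have hsplit : (∫ b, Real.exp (b * (α * t) - b ^ 2 * t / 2) ∂μ) = N + M := by
    rw [hN, hM, ← compl_Ici (a := (0:ℝ))]
    exact (integral_add_compl measurableSet_Ici hint).symm
  simp only [tiltProb]
  rw [hsplit]
  rw [show (1:ℝ) + M / N = (N + M) / N by field_simp, inv_div]

lemma tendsto_tilt_zero (μ : Measure ℝ) [IsProbabilityMeasure μ]
    (hμn : 0 < μ (Iio (0:ℝ))) (α K : ℝ) (I : Set ℝ)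
    (hI : MeasurableSet I) (hIP : I ⊆ Iio 0) (hIpos : 0 < μ I)
    (hK : ∀ b ∈ I, (b - α) ^ 2 ≤ K)
    (hQK : ∀ᵐ b ∂(μ.restrict (Ici 0)), K < (b - α) ^ 2) :
    Tendsto (fun t => tiltProb μ t (α * t) (Set.Ici 0)) atTop (nhds 0) := by
  have key := ratio_tendsto (μ := μ) α K (P := Iio 0) (Q := Ici 0) hI hIP hIpos hK hQK
  have hzero : Tendsto (fun t =>
      ((∫ b in Ici (0:ℝ), Real.exp (b * (α * t) - b ^ 2 * t / 2) ∂μ) /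
      (∫ b in Iio (0:ℝ), Real.exp (b * (α * t) - b ^ 2 * t / 2) ∂μ)) /
      ((∫ b in Ici (0:ℝ), Real.exp (b * (α * t) - b ^ 2 * t / 2) ∂μ) /
      (∫ b in Iio (0:ℝ), Real.exp (b * (α * t) - b ^ 2 * t / 2) ∂μ) + 1)) atTop (nhds 0) := by
    have h := key.div (key.add (tendsto_const_nhds (x := (1:ℝ)))) (by norm_num)
    simpa [Pi.div_def] using h
  refine Tendsto.congr' ?_ hzero
  filter_upwards [eventually_ge_atTop (0:ℝ)] with t ht
  have hint := integrable_tilt (μ := μ) α t ht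
  set N := ∫ b in Ici (0:ℝ), Real.exp (b * (α * t) - b ^ 2 * t / 2) ∂μ with hN
  set M := ∫ b in Iio (0:ℝ), Real.exp (b * (α * t) - b ^ 2 * t / 2) ∂μ with hM
  have hMpos : 0 < M := setIntegral_tilt_pos hμn α t ht
  have hNnn : 0 ≤ N := integral_nonneg fun b => (Real.exp_pos _).le
  have hsplit : (∫ b, Real.exp (b * (α * t) - b ^ 2 * t / 2) ∂μ) = N + M := by
    rw [hN, hM, ← compl_Ici (a := (0:ℝ))]
    exact (integral_add_compl measurableSet_Ici hint).symm
  have hNM : (0:ℝ) < N + M := by linarith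
  simp only [tiltProb]
  rw [hsplit]
  rw [show N / M + 1 = (N + M) / M by field_simp]
  rw [div_div_div_cancel_right₀]
  exact hMpos.ne'

end Stmt10Aux

open Stmt10Aux in
theorem stmt_10 (μ : Measure ℝ) [IsProbabilityMeasure μ]
    (hμ0 : 0 < μ (Set.Ici (0:ℝ))) (hμ1 : μ (Set.Ici (0:ℝ)) < 1)
    (ε : ℝ) (hε : 0 < ε)
    (hexp : Integrable (fun b => Real.exp (ε * b ^ 2)) μ) :
    (∀ α : ℝ, (lEnd μ + rEnd μ) / 2 < α →
      Tendsto (fun t => tiltProb μ t (α * t) (Set.Ici 0)) atTop (nhds 1)) ∧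
    (∀ α : ℝ, α < (lEnd μ + rEnd μ) / 2 →
      Tendsto (fun t => tiltProb μ t (α * t) (Set.Ici 0)) atTop (nhds 0)) := by
  have hμn : 0 < μ (Iio (0:ℝ)) := by
    rw [← compl_Ici (a := (0:ℝ))]
    refine pos_iff_ne_zero.mpr fun h0 => ?_
    have h2 : μ univ ≤ μ (Ici (0:ℝ)) + μ (Ici (0:ℝ))ᶜ := by
      rw [← union_compl_self (Ici (0:ℝ))]
      exact measure_union_le _ _
    rw [h0, add_zero, measure_univ] at h2
    exact absurd (lt_of_le_of_lt h2 hμ1) (lt_irrefl _)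
  have hl0 : lEnd μ ≤ 0 := lEnd_nonpos hμn
  have hr0 : 0 ≤ rEnd μ := rEnd_nonneg hμ0
  have hnullL : μ (Ioo (lEnd μ) 0) = 0 := null_Ioo_lEnd hμn
  have hnullR : μ (Ico 0 (rEnd μ)) = 0 := null_Ico_rEnd hμ0
  set l := lEnd μ with hldef
  set r := rEnd μ with hrdef
  constructor
  · intro α hα
    rcases lt_or_ge l r with hlr | hlr
    · have habs : |r - α| < α - l := by
        rcases abs_cases (r - α) with ⟨h1, h2⟩ | ⟨h1, h2⟩ <;> rw [h1] <;> linarith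
      set θ := (α - l - |r - α|) / 4 with hθdef
      have hθ : 0 < θ := by rw [hθdef]; linarith
      obtain ⟨s, hs, hrs, hsθ⟩ := exists_rset_near hμ0 hθ
      rw [← hrdef] at hrs hsθ
      refine tendsto_tilt_one μ hμ0 α ((|r - α| + 2 * θ) ^ 2) (Ico s (s + θ))
        measurableSet_Ico (fun b hb => le_trans hs.1 hb.1) (hs.2 θ hθ) ?_ ?_
      · intro b hb
        have h2 : |b - r| ≤ 2 * θ := abs_le.mpr ⟨by linarith [hb.1], by linarith [hb.2]⟩
        have h1 : |b - α| ≤ |r - α| + 2 * θ := by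
          calc |b - α| = |(b - r) + (r - α)| := by ring_nf
            _ ≤ |b - r| + |r - α| := abs_add_le _ _
            _ ≤ |r - α| + 2 * θ := by linarith
        calc (b - α) ^ 2 = |b - α| ^ 2 := (sq_abs _).symm
          _ ≤ (|r - α| + 2 * θ) ^ 2 := by
              apply pow_le_pow_left₀ (abs_nonneg _) h1
      · have hae1 : ∀ᵐ b ∂μ.restrict (Iio 0), b ∈ Iio (0:ℝ) :=
          ae_restrict_mem measurableSet_Iio
        have hz : μ.restrict (Iio 0) (Ioo l 0) = 0 := by
          rw [Measure.restrict_apply measurableSet_Ioo]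
          exact measure_mono_null inter_subset_left hnullL
        have hae2 : ∀ᵐ b ∂μ.restrict (Iio 0), b ∉ Ioo l 0 :=
          measure_eq_zero_iff_ae_notMem.mp hz
        filter_upwards [hae1, hae2] with b hb1 hb2
        have hble : b ≤ l := by
          by_contra h
          push_neg at h
          exact hb2 ⟨h, hb1⟩
        have hkey : |r - α| + 2 * θ < α - b := by
          have : α - l = |r - α| + 4 * θ := by rw [hθdef]; ring
          linarith
        nlinarith [abs_nonneg (r - α)]
    · have hl : l = 0 := le_antisymm hl0 (le_trans hr0 hlr)
      have hr : r = 0 := le_antisymm (hlr.trans hl0) hr0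
      have hαpos : 0 < α := by rw [hl, hr] at hα; simpa using hα
      obtain ⟨s, hs, hrs, hsθ⟩ := exists_rset_near hμ0 hαpos
      rw [← hrdef] at hrs hsθ
      have hsα : s < α := by rw [hr] at hsθ; linarith
      refine tendsto_tilt_one μ hμ0 α (α ^ 2) (Ico s (s + (α - s)))
        measurableSet_Ico (fun b hb => le_trans hs.1 hb.1)
        (hs.2 (α - s) (by linarith)) ?_ ?_
      · intro b hb
        have hb2 : b < α := by have := hb.2; linarith
        have hb0 : 0 ≤ b := le_trans hs.1 hb.1
        nlinarith
      · filter_upwards [ae_restrict_mem measurableSet_Iio] with b hb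
        have hb0 : b < 0 := hb
        nlinarith
  · intro α hα
    rcases lt_or_ge l r with hlr | hlr
    · have habs : |l - α| < r - α := by
        rcases abs_cases (l - α) with ⟨h1, h2⟩ | ⟨h1, h2⟩ <;> rw [h1] <;> linarith
      set θ := (r - α - |l - α|) / 4 with hθdef
      have hθ : 0 < θ := by rw [hθdef]; linarith
      obtain ⟨s, hs, hsl, hsθ⟩ := exists_lset_near hμn hθ
      rw [← hldef] at hsl hsθ
      refine tendsto_tilt_zero μ hμn α ((|l - α| + 2 * θ) ^ 2) (Ioc (s - θ) s)
        measurableSet_Ioc (fun b hb => lt_of_le_of_lt hb.2 hs.1) (hs.2 θ hθ) ?_ ?_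
      · intro b hb
        have h2 : |b - l| ≤ 2 * θ := abs_le.mpr ⟨by linarith [hb.1], by linarith [hb.2]⟩
        have h1 : |b - α| ≤ |l - α| + 2 * θ := by
          calc |b - α| = |(b - l) + (l - α)| := by ring_nf
            _ ≤ |b - l| + |l - α| := abs_add_le _ _
            _ ≤ |l - α| + 2 * θ := by linarith
        calc (b - α) ^ 2 = |b - α| ^ 2 := (sq_abs _).symm
          _ ≤ (|l - α| + 2 * θ) ^ 2 := by
              apply pow_le_pow_left₀ (abs_nonneg _) h1
      · have hae1 : ∀ᵐ b ∂μ.restrict (Ici 0), b ∈ Ici (0:ℝ) :=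
          ae_restrict_mem measurableSet_Ici
        have hz : μ.restrict (Ici 0) (Ico 0 r) = 0 := by
          rw [Measure.restrict_apply measurableSet_Ico]
          exact measure_mono_null inter_subset_left hnullR
        have hae2 : ∀ᵐ b ∂μ.restrict (Ici 0), b ∉ Ico 0 r :=
          measure_eq_zero_iff_ae_notMem.mp hz
        filter_upwards [hae1, hae2] with b hb1 hb2
        have hble : r ≤ b := by
          by_contra h
          push_neg at h
          exact hb2 ⟨hb1, h⟩
        have hkey : |l - α| + 2 * θ < b - α := by
          have : r - α = |l - α| + 4 * θ := by rw [hθdef]; ring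
          linarith
        nlinarith [abs_nonneg (l - α)]
    · have hl : l = 0 := le_antisymm hl0 (le_trans hr0 hlr)
      have hr : r = 0 := le_antisymm (hlr.trans hl0) hr0
      have hαneg : α < 0 := by rw [hl, hr] at hα; simpa using hα
      obtain ⟨s, hs, hsl, hsθ⟩ := exists_lset_near hμn (by linarith : (0:ℝ) < -α)
      rw [← hldef] at hsl hsθ
      have hsα : α < s := by rw [hl] at hsθ; linarith
      have hs0 : s < 0 := hs.1
      refine tendsto_tilt_zero μ hμn α ((s - α) ^ 2) (Ioc (s - (s - α)) s)
        measurableSet_Ioc (fun b hb => lt_of_le_of_lt hb.2 hs0)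
        (hs.2 (s - α) (by linarith)) ?_ ?_
      · intro b hb
        have hb1 : α < b := by have := hb.1; linarith
        have hb2 : b ≤ s := hb.2
        nlinarith
      · filter_upwards [ae_restrict_mem measurableSet_Ici] with b hb
        have hb0 : (0:ℝ) ≤ b := hb
        nlinarith
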